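/- (Du's fixed point theorem, specialized to C([0,1]).) Let u0, v0 : [0,1] → ℝ be continuous with u0(s) ≤ v0(s) for all s and u0 ≠ v0, and let [u0, v0] denote the set of continuous p : [0,1] → ℝ with u0 ≤ p ≤ v0 pointwise. Let A : [u0, v0] → C([0,1]) be an operator that is increasing (p ≤ q pointwise implies A p ≤ A q pointwise) and concave (for p ≤ q in [u0, v0] and α ∈ [0,1], A(α·p + (1−α)·q) ≥ α·A p + (1−α)·A q pointwise). Suppose there exists ε ∈ (0,1] with A u0 ≥ u0 + ε·(v0 − u0) pointwise and A v0 ≤ v0 pointwise. Then A has a unique fixed point x* in [u0, v0], and for every x0 ∈ [u0, v0] the iterates A^n x0 converge uniformly to x* as n → ∞. -/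

import Mathlib

open Set Filter

theorem du_fixed_point (u0 v0 : ℝ → ℝ) (A : (ℝ → ℝ) → (ℝ → ℝ))
    (hu0 : ContinuousOn u0 (Set.Icc 0 1))
    (hv0 : ContinuousOn v0 (Set.Icc 0 1))
    (huv : ∀ s ∈ Set.Icc (0 : ℝ) 1, u0 s ≤ v0 s)
    (hne : ∃ s ∈ Set.Icc (0 : ℝ) 1, u0 s ≠ v0 s)
    (hA_cont : ∀ p : ℝ → ℝ, ContinuousOn p (Set.Icc 0 1) →
      (∀ s ∈ Set.Icc (0 : ℝ) 1, u0 s ≤ p s ∧ p s ≤ v0 s) →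
      ContinuousOn (A p) (Set.Icc 0 1))
    (hA_mono : ∀ p q : ℝ → ℝ,
      ContinuousOn p (Set.Icc 0 1) → ContinuousOn q (Set.Icc 0 1) →
      (∀ s ∈ Set.Icc (0 : ℝ) 1, u0 s ≤ p s ∧ p s ≤ v0 s) →
      (∀ s ∈ Set.Icc (0 : ℝ) 1, u0 s ≤ q s ∧ q s ≤ v0 s) →
      (∀ s ∈ Set.Icc (0 : ℝ) 1, p s ≤ q s) →
      ∀ s ∈ Set.Icc (0 : ℝ) 1, A p s ≤ A q s)
    (hA_concave : ∀ p q : ℝ → ℝ,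
      ContinuousOn p (Set.Icc 0 1) → ContinuousOn q (Set.Icc 0 1) →
      (∀ s ∈ Set.Icc (0 : ℝ) 1, u0 s ≤ p s ∧ p s ≤ v0 s) →
      (∀ s ∈ Set.Icc (0 : ℝ) 1, u0 s ≤ q s ∧ q s ≤ v0 s) →
      (∀ s ∈ Set.Icc (0 : ℝ) 1, p s ≤ q s) →
      ∀ α : ℝ, α ∈ Set.Icc (0 : ℝ) 1 →
        ∀ s ∈ Set.Icc (0 : ℝ) 1,
          α * A p s + (1 - α) * A q s ≤ A (fun x => α * p x + (1 - α) * q x) s)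
    (hε : ∃ ε : ℝ, 0 < ε ∧ ε ≤ 1 ∧
      ∀ s ∈ Set.Icc (0 : ℝ) 1, u0 s + ε * (v0 s - u0 s) ≤ A u0 s)
    (hAv0 : ∀ s ∈ Set.Icc (0 : ℝ) 1, A v0 s ≤ v0 s) :
    ∃ xstar : ℝ → ℝ,
      ContinuousOn xstar (Set.Icc 0 1) ∧
      (∀ s ∈ Set.Icc (0 : ℝ) 1, u0 s ≤ xstar s ∧ xstar s ≤ v0 s) ∧
      (∀ s ∈ Set.Icc (0 : ℝ) 1, A xstar s = xstar s) ∧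
      (∀ q : ℝ → ℝ, ContinuousOn q (Set.Icc 0 1) →
        (∀ s ∈ Set.Icc (0 : ℝ) 1, u0 s ≤ q s ∧ q s ≤ v0 s) →
        (∀ s ∈ Set.Icc (0 : ℝ) 1, A q s = q s) →
        Set.EqOn q xstar (Set.Icc 0 1)) ∧
      (∀ x0 : ℝ → ℝ, ContinuousOn x0 (Set.Icc 0 1) →
        (∀ s ∈ Set.Icc (0 : ℝ) 1, u0 s ≤ x0 s ∧ x0 s ≤ v0 s) →
        TendstoUniformlyOn (fun n : ℕ => A^[n] x0) xstar atTop (Set.Icc 0 1)) := by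

  classical
  obtain ⟨ε, hε0, hε1, hεA⟩ := hε
  set I := Set.Icc (0:ℝ) 1 with hIdef
  set r := 1 - ε with hrdef
  have hr0 : 0 ≤ r := by simp [hrdef]; linarith
  have hr1 : r < 1 := by simp [hrdef]; linarith
  -- a bound M on v0 - u0
  obtain ⟨C, hC⟩ := (isCompact_Icc).exists_bound_of_continuousOn (hv0.sub hu0)
  set M := max C 0 with hMdef
  have hM0 : 0 ≤ M := le_max_right _ _
  have hMb : ∀ s ∈ I, v0 s - u0 s ≤ M := by
    intro s hs
    have := hC s hs
    rw [Real.norm_eq_abs] at this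
    exact le_trans (le_abs_self _) (le_trans this (le_max_left _ _))
  -- the main induction
  have key : ∀ n : ℕ,
      ContinuousOn (A^[n] u0) I ∧ ContinuousOn (A^[n] v0) I ∧
      (∀ s ∈ I, u0 s ≤ A^[n] u0 s) ∧
      (∀ s ∈ I, A^[n] u0 s ≤ A^[n] v0 s) ∧
      (∀ s ∈ I, A^[n] v0 s ≤ v0 s) ∧
      (∀ s ∈ I, A^[n] u0 s ≤ A^[n+1] u0 s) ∧
      (∀ s ∈ I, A^[n+1] v0 s ≤ A^[n] v0 s) ∧
      (∀ s ∈ I, (1 - r^n) * A^[n] v0 s + r^n * u0 s ≤ A^[n] u0 s) := by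
    intro n
    induction n with
    | zero =>
      refine ⟨by simpa using hu0, by simpa using hv0, ?_, ?_, ?_, ?_, ?_, ?_⟩
      · intro s hs; simp
      · intro s hs; simpa using huv s hs
      · intro s hs; simp
      · intro s hs
        have h1 := hεA s hs
        have h2 := huv s hs
        simp only [Function.iterate_zero, Function.iterate_one, id_eq, zero_add]
        nlinarith
      · intro s hs
        simpa using hAv0 s hs
      · intro s hs; simp
    | succ n ih =>
      obtain ⟨cu, cv, hu0le, huvn, hvle, hmonu, hmonv, hkey⟩ := ih
      have hsu : A^[n+1] u0 = A (A^[n] u0) := Function.iterate_succ_apply' A n u0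
      have hsv : A^[n+1] v0 = A (A^[n] v0) := Function.iterate_succ_apply' A n v0
      have memu : ∀ s ∈ I, u0 s ≤ A^[n] u0 s ∧ A^[n] u0 s ≤ v0 s :=
        fun s hs => ⟨hu0le s hs, le_trans (huvn s hs) (hvle s hs)⟩
      have memv : ∀ s ∈ I, u0 s ≤ A^[n] v0 s ∧ A^[n] v0 s ≤ v0 s :=
        fun s hs => ⟨le_trans (hu0le s hs) (huvn s hs), hvle s hs⟩
      have cu1 : ContinuousOn (A^[n+1] u0) I := by
        rw [hsu]; exact hA_cont _ cu memu
      have cv1 : ContinuousOn (A^[n+1] v0) I := by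
        rw [hsv]; exact hA_cont _ cv memv
      have h3 : ∀ s ∈ I, u0 s ≤ A^[n+1] u0 s :=
        fun s hs => le_trans (hu0le s hs) (hmonu s hs)
      have h4 : ∀ s ∈ I, A^[n+1] u0 s ≤ A^[n+1] v0 s := by
        intro s hs
        rw [hsu, hsv]
        exact hA_mono _ _ cu cv memu memv huvn s hs
      have h5 : ∀ s ∈ I, A^[n+1] v0 s ≤ v0 s :=
        fun s hs => le_trans (hmonv s hs) (hvle s hs)
      have memu1 : ∀ s ∈ I, u0 s ≤ A^[n+1] u0 s ∧ A^[n+1] u0 s ≤ v0 s :=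
        fun s hs => ⟨h3 s hs, le_trans (h4 s hs) (h5 s hs)⟩
      have memv1 : ∀ s ∈ I, u0 s ≤ A^[n+1] v0 s ∧ A^[n+1] v0 s ≤ v0 s :=
        fun s hs => ⟨le_trans (h3 s hs) (h4 s hs), h5 s hs⟩
      have h6 : ∀ s ∈ I, A^[n+1] u0 s ≤ A^[n+1+1] u0 s := by
        intro s hs
        have e2 : A^[n+1+1] u0 s = A (A^[n+1] u0) s := by
          rw [Function.iterate_succ_apply' A (n+1) u0]
        have e1 : A^[n+1] u0 s = A (A^[n] u0) s := by rw [hsu]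
        rw [e2, e1]
        exact hA_mono _ _ cu cu1 memu memu1 hmonu s hs
      have h7 : ∀ s ∈ I, A^[n+1+1] v0 s ≤ A^[n+1] v0 s := by
        intro s hs
        have e2 : A^[n+1+1] v0 s = A (A^[n+1] v0) s := by
          rw [Function.iterate_succ_apply' A (n+1) v0]
        have e1 : A^[n+1] v0 s = A (A^[n] v0) s := by rw [hsv]
        rw [e2, e1]
        exact hA_mono _ _ cv1 cv memv1 memv hmonv s hs
      refine ⟨cu1, cv1, h3, h4, h5, h6, h7, ?_⟩
      -- the concavity estimate
      set t := r ^ n with htdef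
      have ht0 : 0 ≤ t := pow_nonneg hr0 n
      have ht1 : t ≤ 1 := pow_le_one₀ hr0 (le_of_lt hr1)
      set w : ℝ → ℝ := fun x => t * u0 x + (1 - t) * A^[n] v0 x with hwdef
      have cw : ContinuousOn w I :=
        (continuousOn_const.mul hu0).add (continuousOn_const.mul cv)
      have memw : ∀ s ∈ I, u0 s ≤ w s ∧ w s ≤ v0 s := by
        intro s hs
        have h1 := memv s hs
        constructor
        · simp only [hwdef]; nlinarith [h1.1, h1.2]
        · simp only [hwdef]
          have := huv s hs
          nlinarith [h1.1, h1.2]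
      have hwle : ∀ s ∈ I, w s ≤ A^[n] u0 s := by
        intro s hs
        have := hkey s hs
        simp only [hwdef]
        linarith
      have step1 : ∀ s ∈ I, A w s ≤ A^[n+1] u0 s := by
        intro s hs
        rw [hsu]
        exact hA_mono _ _ cw cu memw memu hwle s hs
      have memu00 : ∀ s ∈ I, u0 s ≤ u0 s ∧ u0 s ≤ v0 s :=
        fun s hs => ⟨le_refl _, huv s hs⟩
      have step2 := hA_concave u0 (A^[n] v0) hu0 cv memu00 memv
        (fun s hs => (memv s hs).1) t ⟨ht0, ht1⟩
      intro s hs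
      have hs1 := step1 s hs
      have hs2 := step2 s hs
      have hεAs := hεA s hs
      have hv1 := h5 s hs
      have hu1 := le_trans (h3 s hs) (h4 s hs)
      have hAveq : A (A^[n] v0) s = A^[n+1] v0 s := by rw [hsv]
      rw [hAveq] at hs2
      have hw2 : A (fun x => t * u0 x + (1 - t) * A^[n] v0 x) s = A w s := rfl
      rw [hw2] at hs2
      have hεt : 0 ≤ t * ε := mul_nonneg ht0 (le_of_lt hε0)
      have hpow : r ^ (n+1) = t * r := by rw [htdef, pow_succ]
      rw [hpow]
      have hkey2 : t * ε * (A^[n+1] v0 s - u0 s) ≤ t * ε * (v0 s - u0 s) := by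
        apply mul_le_mul_of_nonneg_left _ hεt
        linarith
      have h44 := h4 s hs
      have htr : t * r = t - t * ε := by rw [hrdef]; ring
      have hmul := mul_le_mul_of_nonneg_left hεAs ht0
      nlinarith [hs1, hs2, hkey2, hmul, htr]
  -- derived basic facts
  have memu : ∀ n, ∀ s ∈ I, u0 s ≤ A^[n] u0 s ∧ A^[n] u0 s ≤ v0 s :=
    fun n s hs => ⟨(key n).2.2.1 s hs,
      le_trans ((key n).2.2.2.1 s hs) ((key n).2.2.2.2.1 s hs)⟩
  have memv : ∀ n, ∀ s ∈ I, u0 s ≤ A^[n] v0 s ∧ A^[n] v0 s ≤ v0 s :=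
    fun n s hs => ⟨le_trans ((key n).2.2.1 s hs) ((key n).2.2.2.1 s hs),
      (key n).2.2.2.2.1 s hs⟩
  have umono : ∀ s ∈ I, Monotone (fun n => A^[n] u0 s) := fun s hs =>
    monotone_nat_of_le_succ (fun n => (key n).2.2.2.2.2.1 s hs)
  have vanti : ∀ s ∈ I, Antitone (fun n => A^[n] v0 s) := fun s hs =>
    antitone_nat_of_succ_le (fun n => (key n).2.2.2.2.2.2.1 s hs)
  have ulev : ∀ n m, ∀ s ∈ I, A^[n] u0 s ≤ A^[m] v0 s := by
    intro n m s hs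
    rcases le_total n m with h | h
    · exact le_trans (umono s hs h) ((key m).2.2.2.1 s hs)
    · exact le_trans ((key n).2.2.2.1 s hs) (vanti s hs h)
  -- the candidate fixed point
  set xstar : ℝ → ℝ := fun s => ⨆ n, A^[n] u0 s with hxdef
  have bdd : ∀ s ∈ I, BddAbove (Set.range fun n => A^[n] u0 s) := by
    intro s hs
    refine ⟨v0 s, ?_⟩
    rintro _ ⟨n, rfl⟩
    exact (memu n s hs).2
  have hxu : ∀ n, ∀ s ∈ I, A^[n] u0 s ≤ xstar s :=
    fun n s hs => le_ciSup (bdd s hs) n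
  have hxv : ∀ n, ∀ s ∈ I, xstar s ≤ A^[n] v0 s :=
    fun n s hs => ciSup_le (fun m => ulev m n s hs)
  -- gap estimate
  have gap : ∀ n, ∀ s ∈ I, A^[n] v0 s - A^[n] u0 s ≤ r^n * M := by
    intro n s hs
    have h8 := (key n).2.2.2.2.2.2.2 s hs
    have h5 := (key n).2.2.2.2.1 s hs
    have hm := hMb s hs
    have h3 := (key n).2.2.1 s hs
    have hup := huv s hs
    have hr := mul_le_mul_of_nonneg_left
      (show A^[n] v0 s - u0 s ≤ M by linarith) (pow_nonneg hr0 n)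
    nlinarith [pow_nonneg hr0 n]
  have hT : Tendsto (fun n : ℕ => r^n * M) atTop (nhds 0) := by
    have := (tendsto_pow_atTop_nhds_zero_of_lt_one hr0 hr1).mul_const M
    simpa using this
  -- generic uniform convergence
  have unif : ∀ w : ℕ → ℝ → ℝ,
      (∀ n, ∀ s ∈ I, A^[n] u0 s ≤ w n s ∧ w n s ≤ A^[n] v0 s) →
      TendstoUniformlyOn w xstar atTop I := by
    intro w hw
    rw [Metric.tendstoUniformlyOn_iff]
    intro δ hδ
    filter_upwards [hT.eventually (gt_mem_nhds hδ)] with n hn s hs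
    have h1 := hxu n s hs
    have h2 := hxv n s hs
    have h3 := (hw n s hs).1
    have h4 := (hw n s hs).2
    have h5 := gap n s hs
    rw [Real.dist_eq, abs_lt]
    constructor <;> linarith
  have unifu : TendstoUniformlyOn (fun n : ℕ => A^[n] u0) xstar atTop I :=
    unif _ (fun n s hs => ⟨le_refl _, (key n).2.2.2.1 s hs⟩)
  have cx : ContinuousOn xstar I :=
    unifu.continuousOn (Eventually.of_forall fun n => (key n).1).frequently
  have memx : ∀ s ∈ I, u0 s ≤ xstar s ∧ xstar s ≤ v0 s := by
    intro s hs
    constructor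
    · have := hxu 0 s hs; simpa using this
    · have := hxv 0 s hs; simpa using this
  -- fixed point property
  have hAxb : ∀ n, ∀ s ∈ I, A^[n+1] u0 s ≤ A xstar s ∧ A xstar s ≤ A^[n+1] v0 s := by
    intro n s hs
    constructor
    · rw [Function.iterate_succ_apply' A n u0]
      exact hA_mono _ _ (key n).1 cx (memu n) memx (fun s hs => hxu n s hs) s hs
    · rw [Function.iterate_succ_apply' A n v0]
      exact hA_mono _ _ cx (key n).2.1 memx (memv n) (fun s hs => hxv n s hs) s hs
  have hdist0 : ∀ (y : ℝ) (s : ℝ), s ∈ I →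
      (∀ n, A^[n] u0 s ≤ y ∧ y ≤ A^[n] v0 s) → y = xstar s := by
    intro y s hs hy
    have habs : ∀ n, |y - xstar s| ≤ r^n * M := by
      intro n
      have h1 := hxu n s hs
      have h2 := hxv n s hs
      have h3 := (hy n).1
      have h4 := (hy n).2
      have h5 := gap n s hs
      rw [abs_le]
      constructor <;> linarith
    have hle : |y - xstar s| ≤ 0 := ge_of_tendsto hT (Eventually.of_forall habs)
    have := abs_nonpos_iff.mp hle
    linarith [sub_eq_zero.mp this]
  have hfix : ∀ s ∈ I, A xstar s = xstar s := by
    intro s hs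
    apply hdist0 _ s hs
    intro n
    rcases n with _ | n
    · simp only [Function.iterate_zero, id_eq]
      constructor
      · exact le_trans (memu 1 s hs).1 (hAxb 0 s hs).1
      · exact le_trans (hAxb 0 s hs).2 (memv 1 s hs).2
    · exact hAxb n s hs
  refine ⟨xstar, cx, memx, hfix, ?_, ?_⟩
  · -- uniqueness
    intro q cq hmemq hfixq
    have hq : ∀ n, ∀ s ∈ I, A^[n] u0 s ≤ q s ∧ q s ≤ A^[n] v0 s := by
      intro n
      induction n with
      | zero =>
        intro s hs
        simpa using hmemq s hs
      | succ n ih =>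
        intro s hs
        constructor
        · rw [Function.iterate_succ_apply' A n u0]
          calc A (A^[n] u0) s ≤ A q s :=
                hA_mono _ _ (key n).1 cq (memu n) hmemq
                  (fun s' hs' => (ih s' hs').1) s hs
            _ = q s := hfixq s hs
        · rw [Function.iterate_succ_apply' A n v0]
          calc q s = A q s := (hfixq s hs).symm
            _ ≤ A (A^[n] v0) s :=
                hA_mono _ _ cq (key n).2.1 hmemq (memv n)
                  (fun s' hs' => (ih s' hs').2) s hs
    intro s hs
    exact hdist0 _ s hs (fun n => hq n s hs)
  · -- convergence of iterates
    intro x0 cx0 hmemx0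
    have hx0n : ∀ n, ContinuousOn (A^[n] x0) I ∧
        (∀ s ∈ I, A^[n] u0 s ≤ A^[n] x0 s ∧ A^[n] x0 s ≤ A^[n] v0 s) := by
      intro n
      induction n with
      | zero =>
        refine ⟨by simpa using cx0, ?_⟩
        intro s hs
        simpa using hmemx0 s hs
      | succ n ih =>
        obtain ⟨cxn, hxn⟩ := ih
        have memxn : ∀ s ∈ I, u0 s ≤ A^[n] x0 s ∧ A^[n] x0 s ≤ v0 s := by
          intro s hs
          exact ⟨le_trans (memu n s hs).1 (hxn s hs).1,
            le_trans (hxn s hs).2 (memv n s hs).2⟩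
        have cxn1 : ContinuousOn (A^[n+1] x0) I := by
          rw [Function.iterate_succ_apply' A n x0]
          exact hA_cont _ cxn memxn
        refine ⟨cxn1, ?_⟩
        intro s hs
        constructor
        · rw [Function.iterate_succ_apply' A n x0,
            Function.iterate_succ_apply' A n u0]
          exact hA_mono _ _ (key n).1 cxn (memu n) memxn
            (fun s' hs' => (hxn s' hs').1) s hs
        · rw [Function.iterate_succ_apply' A n x0,
            Function.iterate_succ_apply' A n v0]
          exact hA_mono _ _ cxn (key n).2.1 memxn (memv n)
            (fun s' hs' => (hxn s' hs').2) s hs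
    exact unif _ (fun n s hs => (hx0n n).2 s hs)
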